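/- For every permutation σ of {1,…,n}, the pair (R(σ), S(σ)) produced by Extended Patience Sorting is a stable pair: R(σ) and S(σ) have the same shape, and there are no positions (i, j) with i+1 < j at which the pair of words (RPW(R(σ)), RPW(S'(σ))) has a simultaneous occurrence of the pattern pairs (31-2, 13-2), (31-2, 32-1), or (32-1, 13-2). -/

import Mathlib

/-- One step of Patience Sorting: place card `c` on the leftmost pile whose top
(head) is larger than `c`, or start a new pile on the right.  Piles are stored
top-first, so each pile is an increasing list whose head is the top (smallest) card. -/
def PSinsert (c : ℕ) : List (List ℕ) → List (List ℕ)
  | [] => [[c]]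
  | [] :: ps => [] :: PSinsert c ps
  | (x :: p) :: ps =>
      if c < x then (c :: x :: p) :: ps else (x :: p) :: PSinsert c ps

/-- The pile configuration `R(w)` produced by Patience Sorting applied to the word `w`. -/
def PSpiles (w : List ℕ) : List (List ℕ) :=
  w.foldl (fun ps c => PSinsert c ps) []

/-- The one-line word (with values `1,…,n`) of a permutation of `Fin n`. -/
def permWord {n : ℕ} (σ : Equiv.Perm (Fin n)) : List ℕ :=
  List.ofFn fun i => (σ i : ℕ) + 1

/-- The recording piles `S(w)` of Extended Patience Sorting: the `j`-th recording pile is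
the set of (1-based) positions `i` whose value `w(i)` lies in the `j`-th insertion pile,
listed in increasing order from top to bottom (so, like the insertion piles, each
recording pile is stored top-first as an increasing list). -/
def Spiles (w : List ℕ) : List (List ℕ) :=
  (PSpiles w).map fun p =>
    (List.range' 1 w.length).filter (fun i => decide (w.getD (i - 1) 0 ∈ p))

/-- The reverse patience word of a pile configuration: concatenate the piles
left to right, each pile written in decreasing order (bottom to top). -/
def RPW (P : List (List ℕ)) : List ℕ := (P.map List.reverse).flatten

/-- Occurrence of the pattern 31-2 in the word `w` at (0-based) positions `(i, j)`:
`w(i+1) < w(j) < w(i)`. -/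
def Occ31_2 (w : List ℕ) (i j : ℕ) : Prop :=
  w.getD (i + 1) 0 < w.getD j 0 ∧ w.getD j 0 < w.getD i 0

/-- Occurrence of the pattern 13-2 in the word `w` at positions `(i, j)`:
`w(i) < w(j) < w(i+1)`. -/
def Occ13_2 (w : List ℕ) (i j : ℕ) : Prop :=
  w.getD i 0 < w.getD j 0 ∧ w.getD j 0 < w.getD (i + 1) 0

/-- Occurrence of the pattern 32-1 in the word `w` at positions `(i, j)`:
`w(j) < w(i+1) < w(i)`. -/
def Occ32_1 (w : List ℕ) (i j : ℕ) : Prop :=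
  w.getD j 0 < w.getD (i + 1) 0 ∧ w.getD (i + 1) 0 < w.getD i 0

/-- A simultaneous occurrence, at common positions `(i, j)` with `i + 1 < j`, in the pair
of words `(u, v)` of one of the forbidden pattern pairs `(31-2, 13-2)`, `(31-2, 32-1)`,
`(32-1, 13-2)`. -/
def SimOcc (u v : List ℕ) : Prop :=
  ∃ i j : ℕ, i + 1 < j ∧ j < u.length ∧
    ((Occ31_2 u i j ∧ Occ13_2 v i j) ∨ (Occ31_2 u i j ∧ Occ32_1 v i j) ∨
      (Occ32_1 u i j ∧ Occ13_2 v i j))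


namespace PS12

/-- `a` appears immediately before `b` in `l`. -/
def Adj (l : List ℕ) (a b : ℕ) : Prop := ∃ l₁ l₂, l = l₁ ++ a :: b :: l₂

/-- Invariants of the list of blocks (reversed piles, bottom-to-top):
each block nonempty, value-decreasing and `f`-increasing; boundary: last of a block
is smaller than head of the next; and the cover property between blocks. -/
def GoodBlocks (f : ℕ → ℕ) (L : List (List ℕ)) : Prop :=
  (∀ l ∈ L, l ≠ [] ∧ l.Pairwise (fun x y => y < x ∧ f x < f y)) ∧
  L.Chain' (fun l l' => ∀ x ∈ l.getLast?, ∀ y ∈ l'.head?, x < y) ∧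
  L.Pairwise (fun l l' => ∀ b t, Adj l b t → ∀ y ∈ l', f b < f y → f y < f t → b < y)

lemma adj_of_getElem {l : List ℕ} {i : ℕ} (h : i + 1 < l.length) :
    Adj l l[i] l[i+1] := by
  refine ⟨l.take i, l.drop (i+2), ?_⟩
  conv_lhs => rw [← List.take_append_drop i l]
  rw [List.drop_eq_getElem_cons (by omega), List.drop_eq_getElem_cons h]

theorem key (f : ℕ → ℕ) : ∀ (L : List (List ℕ)), GoodBlocks f L → ∀ i j : ℕ, i + 1 < j →
    j < L.flatten.length →
    (L.flatten.getD i 0 < L.flatten.getD (i+1) 0) ∨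
    (L.flatten.getD (i+1) 0 < L.flatten.getD i 0 ∧
      f (L.flatten.getD i 0) < f (L.flatten.getD (i+1) 0) ∧
      (f (L.flatten.getD (i+1) 0) < f (L.flatten.getD j 0) ∨
        (f (L.flatten.getD i 0) < f (L.flatten.getD j 0) →
         f (L.flatten.getD j 0) < f (L.flatten.getD (i+1) 0) →
         L.flatten.getD i 0 < L.flatten.getD j 0)))
  | [], _, i, j, hij, hj => by simp at hj
  | l :: L', ⟨hB, hC, hP⟩, i, j, hij, hj => by
    have hlen : (l :: L').flatten.length = l.length + L'.flatten.length := by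
      simp [List.flatten_cons]
    have hflat : (l :: L').flatten = l ++ L'.flatten := List.flatten_cons ..
    have hlne : l ≠ [] := (hB l (by simp)).1
    have hlpw := (hB l (by simp)).2
    rcases lt_trichotomy (i+1) l.length with h1 | h1 | h1
    · -- i, i+1 in block l
      have hi : i < l.length := by omega
      have hgi : (l :: L').flatten.getD i 0 = l[i] := by
        rw [hflat, List.getD_append _ _ _ _ hi, List.getD_eq_getElem _ _ hi]
      have hgi1 : (l :: L').flatten.getD (i+1) 0 = l[i+1] := by
        rw [hflat, List.getD_append _ _ _ _ h1, List.getD_eq_getElem _ _ h1]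
      have hpw := List.pairwise_iff_getElem.1 hlpw
      have hbt := hpw i (i+1) hi h1 (by omega)
      right
      rw [hgi, hgi1]
      refine ⟨hbt.1, hbt.2, ?_⟩
      by_cases hjm : j < l.length
      · left
        have hgj : (l :: L').flatten.getD j 0 = l[j] := by
          rw [hflat, List.getD_append _ _ _ _ hjm, List.getD_eq_getElem _ _ hjm]
        rw [hgj]
        exact (hpw (i+1) j h1 hjm hij).2
      · right
        push_neg at hjm
        have hjm' : j - l.length < L'.flatten.length := by
          rw [hlen] at hj; omega
        have hgj : (l :: L').flatten.getD j 0 = L'.flatten[j - l.length] := by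
          rw [hflat, List.getD_append_right _ _ _ _ hjm, List.getD_eq_getElem _ _ hjm']
        have hmem : L'.flatten[j - l.length] ∈ L'.flatten := List.getElem_mem _
        obtain ⟨l', hl', hyl'⟩ := List.mem_flatten.1 hmem
        have hrel := (List.pairwise_cons.1 hP).1 l' hl'
        rw [hgj]
        exact fun hb ht => hrel l[i] l[i+1] (adj_of_getElem h1) _ hyl' hb ht
    · -- boundary: i last of l, i+1 first of next block
      left
      have hi : i < l.length := by omega
      have hgi : (l :: L').flatten.getD i 0 = l.getLast hlne := by
        rw [hflat, List.getD_append _ _ _ _ hi, List.getD_eq_getElem _ _ hi,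
          List.getLast_eq_getElem]
        congr 1; omega
      have hj' : j - l.length < L'.flatten.length := by
        rw [hlen] at hj; omega
      have hfne : L'.flatten ≠ [] := by
        intro h; rw [h] at hj'; simp at hj'
      obtain ⟨l'', L''', rfl⟩ : ∃ a b, L' = a :: b := by
        cases L' with
        | nil => simp at hfne
        | cons a b => exact ⟨a, b, rfl⟩
      have hl''ne : l'' ≠ [] := (hB l'' (by simp)).1
      have hgi1 : (l :: l'' :: L''').flatten.getD (i+1) 0 = l''.head hl''ne := by
        rw [hflat, List.getD_append_right _ _ _ _ (le_of_eq h1.symm), h1, Nat.sub_self]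
        rw [List.flatten_cons, List.getD_append _ _ _ _ (by simp [List.length_pos_iff_ne_nil, hl''ne]),
          List.getD_eq_getElem _ _ (by simp [List.length_pos_iff_ne_nil, hl''ne]),
          List.head_eq_getElem]
      rw [hgi, hgi1]
      have hrel := hC.rel_head
      exact hrel _ (by simp [List.getLast?_eq_getLast hlne]) _ (by simp [List.head?_eq_head hl''ne])
    · -- i ≥ l.length : recurse
      have hge : l.length ≤ i := by omega
      have e : ∀ k, l.length ≤ k → (l :: L').flatten.getD k 0 = L'.flatten.getD (k - l.length) 0 := by
        intro k hk; rw [hflat, List.getD_append_right _ _ _ _ hk]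
      have hGB' : GoodBlocks f L' :=
        ⟨fun l' h => hB l' (by simp [h]), hC.tail, (List.pairwise_cons.1 hP).2⟩
      have hj2 : j - l.length < L'.flatten.length := by rw [hlen] at hj; omega
      have hij2 : (i - l.length) + 1 < j - l.length := by omega
      have := key f L' hGB' (i - l.length) (j - l.length) hij2 hj2
      rw [e i hge, e (i+1) (by omega), e j (by omega)]
      have e1 : i + 1 - l.length = (i - l.length) + 1 := by omega
      rw [e1]
      exact this





lemma getD_map_add (f : ℕ → ℕ) (u : List ℕ) (k : ℕ) (h : k < u.length) :
    (u.map fun x => f x + 1).getD k 0 = f (u.getD k 0) + 1 := by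
  rw [List.getD_eq_getElem _ _ (by simpa using h), List.getD_eq_getElem _ _ h,
    List.getElem_map]

theorem noSimOcc (f : ℕ → ℕ) (L : List (List ℕ)) (hL : GoodBlocks f L) :
    ¬ SimOcc L.flatten (L.flatten.map fun x => f x + 1) := by
  rintro ⟨i, j, hij, hj, hpat⟩
  have hkey := key f L hL i j hij hj
  have hi : i < L.flatten.length := by omega
  have hi1 : i + 1 < L.flatten.length := by omega
  have ei := getD_map_add f L.flatten i hi
  have ei1 := getD_map_add f L.flatten (i+1) hi1
  have ej := getD_map_add f L.flatten j hj
  set u := L.flatten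
  set b := u.getD i 0
  set t := u.getD (i+1) 0
  set c := u.getD j 0
  simp only [Occ31_2, Occ13_2, Occ32_1, ei, ei1, ej] at hpat
  rcases hkey with h | ⟨h1, h2, h3⟩
  · -- boundary: b < t, but all u-patterns need t < b
    rcases hpat with ⟨⟨p1, p2⟩, _⟩ | ⟨⟨p1, p2⟩, _⟩ | ⟨⟨p1, p2⟩, _⟩ <;> omega
  · rcases h3 with h3 | h3
    · rcases hpat with ⟨_, q1, q2⟩ | ⟨_, q1, q2⟩ | ⟨_, q1, q2⟩ <;> omega
    · rcases hpat with ⟨⟨p1, p2⟩, q1, q2⟩ | ⟨_, q1, q2⟩ | ⟨⟨p1, p2⟩, q1, q2⟩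
      · have := h3 (by omega) (by omega); omega
      · omega
      · have := h3 (by omega) (by omega); omega

/-! ### Patience sorting invariants -/

/-- Invariant of a single pile (top-first): nonempty, value-increasing, `f`-decreasing. -/
def PileInv (f : ℕ → ℕ) (p : List ℕ) : Prop :=
  p ≠ [] ∧ p.Pairwise fun x y => x < y ∧ f y < f x

/-- Relation between a pile `p` and a pile `q` to its right. -/
def PileRel (f : ℕ → ℕ) (p q : List ℕ) : Prop :=
  (∀ x ∈ p.head?, ∀ y ∈ q.head?, x < y) ∧
  (∀ x ∈ p.head?, ∀ y ∈ q, f x < f y → x < y) ∧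
  (∀ t b, Adj p t b → ∀ y ∈ q, f b < f y → f y < f t → b < y)

lemma pileRel_nil (f : ℕ → ℕ) (p : List ℕ) : PileRel f p [] := by
  refine ⟨?_, ?_, ?_⟩ <;> simp [PileRel]

lemma rel_insert (f : ℕ → ℕ) (c : ℕ) (p₀ : List ℕ)
    (hc : ∀ x ∈ p₀.head?, x < c) (hp₀ : ∀ x ∈ p₀, f x < f c) :
    ∀ (ps : List (List ℕ)), (∀ q ∈ ps, ∀ y ∈ q, f y < f c) →
    (∀ q ∈ ps, PileRel f p₀ q) →
    ∀ q ∈ PSinsert c ps, PileRel f p₀ q := by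
  have newRel : PileRel f p₀ [c] := by
    refine ⟨?_, ?_, ?_⟩
    · intro x hx y hy
      simp at hy; subst hy; exact hc x hx
    · intro x hx y hy _
      simp at hy; subst hy
      exact hc x hx
    · intro t b ⟨l₁, l₂, hadj⟩ y hy hby hyt
      simp at hy; subst hy
      have : t ∈ p₀ := by rw [hadj]; simp
      exact absurd (hp₀ t this) (by omega)
  intro ps
  induction ps with
  | nil =>
    intro _ _ q hq
    simp [PSinsert] at hq; subst hq; exact newRel
  | cons p ps ih =>
    intro hmax hrel q hq
    match p, hq with
    | [], hq =>
      rw [show PSinsert c ([] :: ps) = [] :: PSinsert c ps from rfl] at hq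
      rcases List.mem_cons.1 hq with rfl | hq
      · exact pileRel_nil f p₀
      · exact ih (fun q hq => hmax q (by simp [hq])) (fun q hq => hrel q (by simp [hq])) q hq
    | x :: p, hq =>
      rw [show PSinsert c ((x :: p) :: ps) =
        if c < x then (c :: x :: p) :: ps else (x :: p) :: PSinsert c ps from rfl] at hq
      by_cases hcx : c < x
      · rw [if_pos hcx] at hq
        rcases List.mem_cons.1 hq with rfl | hq
        · -- q = c :: x :: p ; old pile was x :: p
          have hold : PileRel f p₀ (x :: p) := hrel _ (by simp)
          refine ⟨?_, ?_, ?_⟩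
          · intro a ha y hy
            simp at hy; subst hy; exact hc a ha
          · intro a ha y hy hf
            rcases List.mem_cons.1 hy with rfl | hy
            · exact hc a ha
            · exact hold.2.1 a ha y (by simp [hy]) hf
          · intro t b hadj y hy hby hyt
            rcases List.mem_cons.1 hy with rfl | hy
            · obtain ⟨l₁, l₂, he⟩ := hadj
              have : t ∈ p₀ := by rw [he]; simp
              exact absurd (hp₀ t this) (by omega)
            · exact hold.2.2 t b hadj y (by simp [hy]) hby hyt
        · exact hrel q (by simp [hq])
      · rw [if_neg hcx] at hq
        rcases List.mem_cons.1 hq with rfl | hq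
        · exact hrel _ (by simp)
        · exact ih (fun q hq => hmax q (by simp [hq])) (fun q hq => hrel q (by simp [hq])) q hq

theorem insert_main (f : ℕ → ℕ) (c : ℕ) :
    ∀ (P : List (List ℕ)), (∀ p ∈ P, PileInv f p) → P.Pairwise (PileRel f) →
    (∀ p ∈ P, ∀ x ∈ p, f x < f c) →
    (∀ p ∈ PSinsert c P, PileInv f p) ∧ (PSinsert c P).Pairwise (PileRel f) ∧
      (∀ p ∈ PSinsert c P, ∀ x ∈ p, x = c ∨ ∃ q ∈ P, x ∈ q)
  | [], h1, h2, hmax => by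
    refine ⟨?_, ?_, ?_⟩
    · intro p hp
      simp [PSinsert] at hp; subst hp
      exact ⟨by simp, by simp⟩
    · simp [PSinsert]
    · intro p hp x hx
      simp [PSinsert] at hp; subst hp
      simp at hx; exact Or.inl hx
  | [] :: ps, h1, h2, hmax => absurd rfl (h1 [] (by simp)).1
  | (x :: p) :: ps, h1, h2, hmax => by
    have hpi := h1 (x :: p) (by simp)
    have hmax0 := hmax (x :: p) (by simp)
    have hrest : ∀ q ∈ ps, PileRel f (x :: p) q := fun q hq => (List.pairwise_cons.1 h2).1 q hq
    by_cases hcx : c < x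
    · rw [show PSinsert c ((x :: p) :: ps) = (c :: x :: p) :: ps from if_pos hcx]
      refine ⟨?_, ?_, ?_⟩
      · intro q hq
        rcases List.mem_cons.1 hq with rfl | hq
        · refine ⟨by simp, List.pairwise_cons.2 ⟨?_, hpi.2⟩⟩
          intro y hy
          refine ⟨?_, hmax0 y hy⟩
          rcases List.mem_cons.1 hy with rfl | hy
          · exact hcx
          · exact lt_trans hcx ((List.pairwise_cons.1 hpi.2).1 y hy).1
        · exact h1 q (by simp [hq])
      · refine List.pairwise_cons.2 ⟨?_, (List.pairwise_cons.1 h2).2⟩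
        intro q hq
        have hold := hrest q hq
        have hqmax : ∀ y ∈ q, f y < f c := hmax q (by simp [hq])
        refine ⟨?_, ?_, ?_⟩
        · intro a ha y hy
          simp at ha; subst ha
          exact lt_trans hcx (hold.1 x (by simp) y hy)
        · intro a ha y hy hf
          simp at ha; subst ha
          exact absurd (hqmax y hy) (by omega)
        · rintro t b ⟨l₁, l₂, he⟩ y hy hby hyt
          cases l₁ with
          | nil =>
            simp only [List.nil_append, List.cons.injEq] at he
            obtain ⟨rfl, rfl, rfl⟩ := he
            exact hold.2.1 _ (by simp) y hy hby
          | cons a l₁ =>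
            simp only [List.cons_append, List.cons.injEq] at he
            obtain ⟨rfl, he⟩ := he
            exact hold.2.2 t b ⟨l₁, l₂, he⟩ y hy hby hyt
      · intro q hq y hy
        rcases List.mem_cons.1 hq with rfl | hq
        · rcases List.mem_cons.1 hy with rfl | hy
          · exact Or.inl rfl
          · exact Or.inr ⟨x :: p, by simp, hy⟩
        · exact Or.inr ⟨q, by simp [hq], hy⟩
    · rw [show PSinsert c ((x :: p) :: ps) = (x :: p) :: PSinsert c ps from if_neg hcx]
      obtain ⟨ih1, ih2, ih3⟩ := insert_main f c ps (fun q hq => h1 q (by simp [hq]))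
        (List.pairwise_cons.1 h2).2 (fun q hq => hmax q (by simp [hq]))
      have hxc : x < c := by
        have hfx : f x < f c := hmax0 x (by simp)
        rcases Nat.lt_or_ge x c with h | h
        · exact h
        · rcases Nat.eq_or_lt_of_le h with rfl | h
          · omega
          · exact absurd h (by omega)
      refine ⟨?_, ?_, ?_⟩
      · intro q hq
        rcases List.mem_cons.1 hq with rfl | hq
        · exact hpi
        · exact ih1 q hq
      · refine List.pairwise_cons.2 ⟨?_, ih2⟩
        exact rel_insert f c (x :: p) (by simpa using hxc) (hmax0) ps
          (fun q hq => hmax q (by simp [hq])) hrest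
      · intro q hq y hy
        rcases List.mem_cons.1 hq with rfl | hq
        · exact Or.inr ⟨x :: p, by simp, hy⟩
        · rcases ih3 q hq y hy with rfl | ⟨q', hq', hy'⟩
          · exact Or.inl rfl
          · exact Or.inr ⟨q', by simp [hq'], hy'⟩

theorem fold_inv (f : ℕ → ℕ) : ∀ (w₂ w₁ : List ℕ) (P : List (List ℕ)),
    (w₁ ++ w₂).Pairwise (fun x y => f x < f y) →
    (∀ p ∈ P, PileInv f p) → P.Pairwise (PileRel f) →
    (∀ p ∈ P, ∀ x ∈ p, x ∈ w₁) →
    (∀ p ∈ w₂.foldl (fun ps c => PSinsert c ps) P, PileInv f p) ∧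
    (w₂.foldl (fun ps c => PSinsert c ps) P).Pairwise (PileRel f) ∧
    (∀ p ∈ w₂.foldl (fun ps c => PSinsert c ps) P, ∀ x ∈ p, x ∈ w₁ ++ w₂)
  | [], w₁, P, hw, h1, h2, hs => by
    refine ⟨h1, h2, ?_⟩
    simpa using hs
  | c :: w₂', w₁, P, hw, h1, h2, hs => by
    have hmax : ∀ p ∈ P, ∀ x ∈ p, f x < f c := fun p hp x hx =>
      (List.pairwise_append.1 hw).2.2 x (hs p hp x hx) c (by simp)
    obtain ⟨i1, i2, i3⟩ := insert_main f c P h1 h2 hmax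
    have hw' : ((w₁ ++ [c]) ++ w₂').Pairwise (fun x y => f x < f y) := by
      simpa [List.append_assoc] using hw
    have hs' : ∀ p ∈ PSinsert c P, ∀ x ∈ p, x ∈ w₁ ++ [c] := by
      intro p hp x hx
      rcases i3 p hp x hx with rfl | ⟨q, hq, hx'⟩
      · simp
      · simp [hs q hq x hx']
    have hres := fold_inv f w₂' (w₁ ++ [c]) (PSinsert c P) hw' i1 i2 hs'
    refine ⟨hres.1, hres.2.1, ?_⟩
    intro p hp x hx
    have := hres.2.2 p hp x hx
    simpa [List.append_assoc] using this

lemma pileInv_head_le_getLast (f : ℕ → ℕ) (q : List ℕ) (h : PileInv f q) :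
    ∀ a ∈ q.head?, ∀ b ∈ q.getLast?, a ≤ b := by
  obtain ⟨hne, hpw⟩ := h
  match q with
  | z :: q' =>
    intro a ha b hb
    simp at ha; subst ha
    rw [List.getLast?_eq_getLast (l := z :: q') (by simp)] at hb
    simp at hb
    have hmem := List.getLast_mem (l := z :: q') (by simp)
    rw [hb] at hmem
    rcases List.mem_cons.1 hmem with he | hmem
    · omega
    · exact le_of_lt ((List.pairwise_cons.1 hpw).1 b hmem).1

theorem goodBlocks_of_inv (f : ℕ → ℕ) (P : List (List ℕ))
    (h1 : ∀ p ∈ P, PileInv f p) (h2 : P.Pairwise (PileRel f)) :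
    GoodBlocks f (P.map List.reverse) := by
  refine ⟨?_, ?_, ?_⟩
  · intro l hl
    obtain ⟨p, hp, rfl⟩ := List.mem_map.1 hl
    refine ⟨by simpa using (h1 p hp).1, ?_⟩
    rw [List.pairwise_reverse]
    exact (h1 p hp).2
  · apply List.Pairwise.isChain
    rw [List.pairwise_map]
    refine List.Pairwise.imp_of_mem ?_ h2
    intro p q hp hq hrel x hx y hy
    rw [List.getLast?_reverse] at hx
    rw [List.head?_reverse] at hy
    have h3 := pileInv_head_le_getLast f q (h1 q hq)
    match q, hy with
    | z :: q', hy =>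
      have hzy := h3 z (by simp) y hy
      have := hrel.1 x hx z (by simp)
      omega
  · rw [List.pairwise_map]
    refine List.Pairwise.imp_of_mem ?_ h2
    intro p q hp hq hrel b t ⟨l₁, l₂, he⟩ y hy hby hyt
    have hpe : p = l₂.reverse ++ t :: b :: l₁.reverse := by
      have := congrArg List.reverse he
      simpa [List.reverse_append] using this
    exact hrel.2.2 t b ⟨l₂.reverse, l₁.reverse, hpe⟩ y (by simpa using hy) hby hyt

lemma spile_eq (w : List ℕ) (hw : w.Nodup) (p : List ℕ)
    (hsub : ∀ x ∈ p, x ∈ w)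
    (hpw : p.Pairwise fun x y => List.idxOf y w < List.idxOf x w) :
    (List.range' 1 w.length).filter (fun i => decide (w.getD (i - 1) 0 ∈ p)) =
      p.reverse.map (fun x => List.idxOf x w + 1) := by
  refine (fun hp hs₁ hs₂ => List.Perm.eq_of_pairwise (le := (· < · : ℕ → ℕ → Prop))
    (fun a b _ _ h h' => absurd (lt_trans h h') (lt_irrefl a)) hs₁ hs₂ hp) ?_ ?_ ?_
  · rw [List.perm_ext_iff_of_nodup]
    · intro i
      rw [List.mem_filter]
      simp only [List.mem_range'_1, List.mem_map, List.mem_reverse, decide_eq_true_eq]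
      constructor
      · rintro ⟨⟨h1, h2⟩, hmem⟩
        have hi : i - 1 < w.length := by omega
        rw [List.getD_eq_getElem _ _ hi] at hmem
        refine ⟨w[i-1], hmem, ?_⟩
        rw [List.Nodup.idxOf_getElem hw]
        omega
      · rintro ⟨x, hx, rfl⟩
        have hidx : List.idxOf x w < w.length := List.idxOf_lt_length_iff.2 (hsub x hx)
        refine ⟨⟨by omega, by omega⟩, ?_⟩
        simp only [Nat.add_sub_cancel]
        rw [List.getD_eq_getElem _ _ hidx, List.getElem_idxOf hidx]
        exact hx
    · exact (List.nodup_range' (s := 1) (n := w.length)).filter _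
    · have hlt : (p.reverse.map fun x => List.idxOf x w + 1).Pairwise (· < ·) :=
        (List.pairwise_map).2 ((List.pairwise_reverse).2 (hpw.imp fun h => by omega))
      exact hlt.imp Nat.ne_of_lt
  · exact List.Pairwise.filter _ (List.pairwise_lt_range' (s := 1) (n := w.length))
  · exact (List.pairwise_map).2 ((List.pairwise_reverse).2 (hpw.imp fun h => by omega))

lemma spiles_eq (w : List ℕ) (hw : w.Nodup)
    (h : ∀ p ∈ PSpiles w, (∀ x ∈ p, x ∈ w) ∧
      p.Pairwise fun x y => List.idxOf y w < List.idxOf x w) :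
    Spiles w = (PSpiles w).map fun p => p.reverse.map (fun x => List.idxOf x w + 1) := by
  unfold Spiles
  exact List.map_congr_left fun p hp => spile_eq w hw p (h p hp).1 (h p hp).2

end PS12

/-- For every permutation `σ` of `{1,…,n}`, the pair `(R(σ), S(σ))`
produced by Extended Patience Sorting is a stable pair: `R(σ)` and `S(σ)` have the same
shape, and the pair of words `(RPW(R(σ)), RPW(S'(σ)))` has no simultaneous occurrence
of `(31-2, 13-2)`, `(31-2, 32-1)`, or `(32-1, 13-2)` at common positions `(i, j)` with
`i + 1 < j`.  (Here `RPW(S'(σ))` is the concatenation of the recording piles, each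
written in increasing order, i.e. `(Spiles w).flatten`.) -/
theorem stmt12 (n : ℕ) (σ : Equiv.Perm (Fin n)) :
    (PSpiles (permWord σ)).map List.length = (Spiles (permWord σ)).map List.length ∧
    ¬ SimOcc (RPW (PSpiles (permWord σ))) ((Spiles (permWord σ)).flatten) := by
  set w := permWord σ with hwdef
  set f : ℕ → ℕ := fun x => List.idxOf x w with hfdef
  have hw : w.Nodup := by
    rw [hwdef, permWord, List.nodup_ofFn]
    intro i j h
    simp only [Nat.add_right_cancel_iff] at h
    exact σ.injective (Fin.ext h)
  have hwpw : w.Pairwise fun x y => f x < f y := by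
    rw [List.pairwise_iff_getElem]
    intro i j hi hj hij
    simp only [hfdef, List.Nodup.idxOf_getElem hw]
    exact hij
  obtain ⟨h1, h2, hsup⟩ := PS12.fold_inv f w [] [] (by simpa using hwpw)
    (by simp) (by simp) (by simp)
  have h1' : ∀ p ∈ PSpiles w, PS12.PileInv f p := h1
  have h2' : (PSpiles w).Pairwise (PS12.PileRel f) := h2
  have hsup' : ∀ p ∈ PSpiles w, ∀ x ∈ p, x ∈ w := by simpa [PSpiles] using hsup
  have hSp := PS12.spiles_eq w hw (fun p hp => ⟨hsup' p hp,
    ((h1' p hp).2).imp fun h => h.2⟩)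
  constructor
  · rw [hSp, List.map_map]
    exact (List.map_congr_left fun p hp => by simp).symm
  · have hGB := PS12.goodBlocks_of_inv f (PSpiles w) h1' h2'
    have hns := PS12.noSimOcc f ((PSpiles w).map List.reverse) hGB
    have e1 : RPW (PSpiles w) = ((PSpiles w).map List.reverse).flatten := rfl
    have e2 : (Spiles w).flatten =
        (((PSpiles w).map List.reverse).flatten).map fun x => f x + 1 := by
      rw [hSp, List.map_flatten, List.map_map]
      rfl
    rw [e1, e2]
    exact hns
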